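/- Let G be a bipartite graph with parts A and B and let f : E → [0,1] satisfy Σ_{u ∈ B} f(v,u) ≤ 1 for all v ∈ A, Σ_{v ∈ A} f(v,u) ≤ 1 for all u ∈ B, and Σ_{e} f(e) = m ∈ ℕ. Then there exists a probability distribution μ on the set M_m of matchings of size m in G such that for each edge e, the μ-probability that a random matching contains e equals f(e). -/

import Mathlib

/-- A matching of size `m` in the bipartite graph with parts `A`, `B` and edge set `E`. -/
def IsSizeMMatching {A B : Type*} [DecidableEq A] [DecidableEq B]
    (E : Finset (A × B)) (m : ℕ) (M : Finset (A × B)) : Prop :=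
  M ⊆ E ∧ M.card = m ∧
    ∀ e ∈ M, ∀ e' ∈ M, e ≠ e' → e.1 ≠ e'.1 ∧ e.2 ≠ e'.2

/-- Auxiliary matrix used in the proof of `stmt_6`: the fractional matching `f` on `A × B`
bordered with uniformly distributed slack against dummy vertices, and a zero dummy-dummy
block. -/
noncomputable def stmt6Aux {A B : Type*} [Fintype A] [Fintype B] (f : A × B → ℝ) (m : ℕ) :
    (A ⊕ Fin (Fintype.card B - m)) → (B ⊕ Fin (Fintype.card A - m)) → ℝ :=
  Sum.elim
    (fun v => Sum.elim (fun u => f (v, u))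
      (fun _ => (1 - ∑ u : B, f (v, u)) / ((Fintype.card A - m : ℕ) : ℝ)))
    (fun _ => Sum.elim (fun u => (1 - ∑ v : A, f (v, u)) / ((Fintype.card B - m : ℕ) : ℝ))
      (fun _ => 0))

/-- If `f : E → [0,1]` is a fractional matching of total weight `m ∈ ℕ`, then there is a
probability distribution `μ` on the matchings of size `m` such that a `μ`-random matching
contains any fixed edge `e` with probability exactly `f(e)`. -/
theorem stmt_6 {A B : Type*} [Fintype A] [Fintype B] [DecidableEq A] [DecidableEq B]
    (E : Finset (A × B)) (m : ℕ) (f : A × B → ℝ)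
    (hf0 : ∀ e, 0 ≤ f e) (hf1 : ∀ e, f e ≤ 1) (hsupp : ∀ e ∉ E, f e = 0)
    (hA : ∀ v : A, ∑ u : B, f (v, u) ≤ 1)
    (hB : ∀ u : B, ∑ v : A, f (v, u) ≤ 1)
    (hm : ∑ e ∈ E, f e = m) :
    ∃ μ : Finset (A × B) → ℝ,
      (∀ M, 0 ≤ μ M) ∧
      (∀ M, μ M ≠ 0 → IsSizeMMatching E m M) ∧
      (∑ M : Finset (A × B), μ M = 1) ∧
      (∀ e : A × B, ∑ M : Finset (A × B), (if e ∈ M then μ M else 0) = f e) := by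
  classical
  -- total weight computations
  have hall' : ∑ p : A × B, f p = m := by
    rw [← hm]
    exact (Finset.sum_subset (Finset.subset_univ E) (fun e _ he => hsupp e he)).symm
  have hall : ∑ v : A, ∑ u : B, f (v, u) = m := by
    rw [← Fintype.sum_prod_type]; exact hall'
  have hallBA : ∑ u : B, ∑ v : A, f (v, u) = m := by
    rw [Finset.sum_comm]; exact hall
  have hma : m ≤ Fintype.card A := by
    have h : (m : ℝ) ≤ Fintype.card A := by
      rw [← hall]
      calc ∑ v : A, ∑ u : B, f (v, u) ≤ ∑ _v : A, (1 : ℝ) :=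
            Finset.sum_le_sum (fun v _ => hA v)
        _ = Fintype.card A := by simp
    exact_mod_cast h
  have hmb : m ≤ Fintype.card B := by
    have h : (m : ℝ) ≤ Fintype.card B := by
      rw [← hallBA]
      calc ∑ u : B, ∑ v : A, f (v, u) ≤ ∑ _u : B, (1 : ℝ) :=
            Finset.sum_le_sum (fun u _ => hB u)
        _ = Fintype.card B := by simp
    exact_mod_cast h
  have hcard : Fintype.card (B ⊕ Fin (Fintype.card A - m)) =
      Fintype.card (A ⊕ Fin (Fintype.card B - m)) := by
    simp only [Fintype.card_sum, Fintype.card_fin]; omega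
  set I := A ⊕ Fin (Fintype.card B - m) with hI
  set J := B ⊕ Fin (Fintype.card A - m) with hJ
  let ε : J ≃ I := Fintype.equivOfCardEq hcard
  set G : I → J → ℝ := stmt6Aux f m with hG
  set Mat : Matrix I I ℝ := fun i j => G i (ε.symm j) with hMat
  -- basic slack facts
  have hsum1A : (∑ v : A, (1 - ∑ u : B, f (v, u))) = ((Fintype.card A - m : ℕ) : ℝ) := by
    rw [Finset.sum_sub_distrib, hall, Nat.cast_sub hma]
    simp
  have hsum1B : (∑ u : B, (1 - ∑ v : A, f (v, u))) = ((Fintype.card B - m : ℕ) : ℝ) := by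
    rw [Finset.sum_sub_distrib, hallBA, Nat.cast_sub hmb]
    simp
  -- if there is no slack on one side, every row there is tight
  have hrowtight : Fintype.card A - m = 0 → ∀ v : A, ∑ u : B, f (v, u) = 1 := by
    intro h0 v
    by_contra hne
    have hlt : ∑ u : B, f (v, u) < 1 := lt_of_le_of_ne (hA v) hne
    have h2 : ∑ v : A, ∑ u : B, f (v, u) < ∑ _v : A, (1 : ℝ) :=
      Finset.sum_lt_sum (fun i _ => hA i) ⟨v, Finset.mem_univ v, hlt⟩
    rw [hall] at h2
    simp only [Finset.sum_const, Finset.card_univ, nsmul_eq_mul, mul_one] at h2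
    have : Fintype.card A ≤ m := by omega
    exact absurd h2 (not_lt.2 (by exact_mod_cast this))
  have hcoltight : Fintype.card B - m = 0 → ∀ u : B, ∑ v : A, f (v, u) = 1 := by
    intro h0 u
    by_contra hne
    have hlt : ∑ v : A, f (v, u) < 1 := lt_of_le_of_ne (hB u) hne
    have h2 : ∑ u : B, ∑ v : A, f (v, u) < ∑ _u : B, (1 : ℝ) :=
      Finset.sum_lt_sum (fun i _ => hB i) ⟨u, Finset.mem_univ u, hlt⟩
    rw [hallBA] at h2
    simp only [Finset.sum_const, Finset.card_univ, nsmul_eq_mul, mul_one] at h2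
    have : Fintype.card B ≤ m := by omega
    exact absurd h2 (not_lt.2 (by exact_mod_cast this))
  -- row sums of G
  have hrowA : ∀ v : A, ∑ j : J, G (Sum.inl v) j = 1 := by
    intro v
    rw [hG, Fintype.sum_sum_type]
    simp only [stmt6Aux, Sum.elim_inl, Sum.elim_inr]
    rw [Finset.sum_const, Finset.card_univ, Fintype.card_fin, nsmul_eq_mul]
    rcases eq_or_ne (Fintype.card A - m) 0 with h | h
    · rw [hrowtight h v, h]; norm_num
    · have hne : ((Fintype.card A - m : ℕ) : ℝ) ≠ 0 := Nat.cast_ne_zero.2 h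
      rw [mul_comm, div_mul_cancel₀ _ hne]; ring
  have hrowC : ∀ x : Fin (Fintype.card B - m), ∑ j : J, G (Sum.inr x) j = 1 := by
    intro x
    rw [hG, Fintype.sum_sum_type]
    simp only [stmt6Aux, Sum.elim_inl, Sum.elim_inr]
    rw [Finset.sum_const, Finset.card_univ, Fintype.card_fin]
    simp only [smul_zero, add_zero, ← Finset.sum_div, hsum1B]
    exact div_self (Nat.cast_pos.mpr x.pos).ne'
  -- column sums of G
  have hcolB : ∀ u : B, ∑ i : I, G i (Sum.inl u) = 1 := by
    intro u
    rw [hG, Fintype.sum_sum_type]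
    simp only [stmt6Aux, Sum.elim_inl, Sum.elim_inr]
    rw [Finset.sum_const, Finset.card_univ, Fintype.card_fin, nsmul_eq_mul]
    rcases eq_or_ne (Fintype.card B - m) 0 with h | h
    · rw [hcoltight h u, h]; norm_num
    · have hne : ((Fintype.card B - m : ℕ) : ℝ) ≠ 0 := Nat.cast_ne_zero.2 h
      rw [mul_comm, div_mul_cancel₀ _ hne]; ring
  have hcolD : ∀ y : Fin (Fintype.card A - m), ∑ i : I, G i (Sum.inr y) = 1 := by
    intro y
    rw [hG, Fintype.sum_sum_type]
    simp only [stmt6Aux, Sum.elim_inl, Sum.elim_inr]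
    rw [Finset.sum_const, Finset.card_univ, Fintype.card_fin]
    simp only [smul_zero, add_zero, ← Finset.sum_div, hsum1A]
    exact div_self (Nat.cast_pos.mpr y.pos).ne'
  -- nonnegativity of G
  have hGnn : ∀ i j, 0 ≤ G i j := by
    rintro (v | x) (u | y) <;> simp only [hG, stmt6Aux, Sum.elim_inl, Sum.elim_inr]
    · exact hf0 _
    · exact div_nonneg (by linarith [hA v]) (Nat.cast_nonneg _)
    · exact div_nonneg (by linarith [hB u]) (Nat.cast_nonneg _)
    · exact le_refl _
  -- Mat is doubly stochastic
  have hDS : Mat ∈ doublyStochastic ℝ I := by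
    rw [mem_doublyStochastic_iff_sum]
    refine ⟨fun i j => hGnn i _, fun i => ?_, fun j => ?_⟩
    · have hcomp : ∑ j : I, Mat i j = ∑ j' : J, G i j' := Equiv.sum_comp ε.symm (G i)
      rw [hcomp]
      rcases i with v | x
      · exact hrowA v
      · exact hrowC x
    · obtain ⟨j', rfl⟩ : ∃ j', ε j' = j := ⟨ε.symm j, Equiv.apply_symm_apply _ _⟩
      have hcomp : ∑ i : I, Mat i (ε j') = ∑ i : I, G i j' := by
        apply Finset.sum_congr rfl
        intro i _
        rw [hMat]
        simp
      rw [hcomp]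
      rcases j' with u | y
      · exact hcolB u
      · exact hcolD y
  -- Birkhoff decomposition
  obtain ⟨w, hw0, hw1, hwM⟩ := exists_eq_sum_perm_of_mem_doublyStochastic hDS
  have hentry : ∀ i j : I, Mat i j = ∑ σ : Equiv.Perm I, (if σ i = j then w σ else 0) := by
    intro i j
    rw [← hwM]
    rw [Matrix.sum_apply]
    apply Finset.sum_congr rfl
    intro σ _
    simp [Equiv.Perm.permMatrix, PEquiv.toMatrix_apply, Equiv.toPEquiv_apply, mul_ite]
  have hpos : ∀ σ : Equiv.Perm I, w σ ≠ 0 → ∀ i, 0 < Mat i (σ i) := by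
    intro σ hσ i
    have h1 : 0 < w σ := (hw0 σ).lt_of_ne' hσ
    rw [hentry]
    have h2 : (if σ i = σ i then w σ else 0) ≤
        ∑ σ' : Equiv.Perm I, (if σ' i = σ i then w σ' else 0) :=
      Finset.single_le_sum (f := fun σ' => if σ' i = σ i then w σ' else 0)
        (fun τ _ => by split <;> simp [hw0 τ]) (Finset.mem_univ σ)
    simp only [if_pos rfl] at h2
    exact lt_of_lt_of_le h1 h2
  have hMatAB : ∀ (v : A) (u : B), Mat (Sum.inl v) (ε (Sum.inl u)) = f (v, u) := by
    intro v u
    rw [hMat]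
    simp [hG, stmt6Aux]
  -- the matching associated to a permutation
  set matchOf : Equiv.Perm I → Finset (A × B) :=
    fun σ => Finset.univ.filter (fun p : A × B => σ (Sum.inl p.1) = ε (Sum.inl p.2))
    with hmatchOf
  have hmem : ∀ (σ : Equiv.Perm I) (p : A × B),
      p ∈ matchOf σ ↔ σ (Sum.inl p.1) = ε (Sum.inl p.2) := by
    intro σ p; simp [hmatchOf]
  -- matchOf σ is a size-m matching whenever w σ ≠ 0
  have hmatching : ∀ σ : Equiv.Perm I, w σ ≠ 0 → IsSizeMMatching E m (matchOf σ) := by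
    intro σ hσ
    have hC : ∀ x : Fin (Fintype.card B - m), ∃ u : B, σ (Sum.inr x) = ε (Sum.inl u) := by
      intro x
      obtain ⟨j', hj'⟩ : ∃ j', ε j' = σ (Sum.inr x) := ⟨ε.symm _, Equiv.apply_symm_apply _ _⟩
      rcases j' with u | y
      · exact ⟨u, hj'.symm⟩
      · exfalso
        have h1 := hpos σ hσ (Sum.inr x)
        rw [← hj'] at h1
        rw [hMat] at h1
        simp only [Equiv.symm_apply_apply] at h1
        simp [hG, stmt6Aux] at h1
    refine ⟨?_, ?_, ?_⟩
    · -- subset of E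
      intro p hp
      rw [hmem] at hp
      by_contra hpE
      have h1 := hpos σ hσ (Sum.inl p.1)
      rw [hp, hMatAB] at h1
      rw [Prod.mk.eta, hsupp p hpE] at h1
      exact lt_irrefl _ h1
    · -- cardinality
      set S : Finset I := Finset.univ.filter (fun i => ∃ u : B, σ i = ε (Sum.inl u)) with hS
      have hScard : S.card = Fintype.card B := by
        have himg : S = Finset.univ.image (fun u : B => σ.symm (ε (Sum.inl u))) := by
          ext i
          simp only [hS, Finset.mem_filter, Finset.mem_univ, true_and, Finset.mem_image]
          constructor
          · rintro ⟨u, hu⟩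
            exact ⟨u, by rw [← hu, Equiv.symm_apply_apply]⟩
          · rintro ⟨u, rfl⟩
            exact ⟨u, by rw [Equiv.apply_symm_apply]⟩
        have hinj : Function.Injective (fun u : B => σ.symm (ε (Sum.inl u))) :=
          fun x y h => Sum.inl_injective (ε.injective (σ.symm.injective h))
        rw [himg, Finset.card_image_of_injective _ hinj]
        simp
      have hSright : S.toRight = Finset.univ := by
        ext x
        simp only [Finset.mem_toRight, hS, Finset.mem_filter, Finset.mem_univ, true_and,
          iff_true]
        exact hC x
      have hTcard : S.toLeft.card = m := by
        have h1 := Finset.card_toLeft_add_card_toRight (u := S)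
        rw [hSright, hScard] at h1
        simp only [Finset.card_univ, Fintype.card_fin] at h1
        omega
      rw [← hTcard]
      apply Finset.card_bij (fun p _ => p.1)
      · intro p hp
        rw [hmem] at hp
        rw [Finset.mem_toLeft]
        simp only [hS, Finset.mem_filter, Finset.mem_univ, true_and]
        exact ⟨p.2, hp⟩
      · intro p hp q hq hpq
        rw [hmem] at hp hq
        have h1 : σ (Sum.inl p.1) = σ (Sum.inl q.1) := by rw [hpq]
        rw [hp, hq] at h1
        have h2 : p.2 = q.2 := Sum.inl_injective (ε.injective h1)
        exact Prod.ext hpq h2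
      · intro v hv
        rw [Finset.mem_toLeft] at hv
        simp only [hS, Finset.mem_filter, Finset.mem_univ, true_and] at hv
        obtain ⟨u, hu⟩ := hv
        exact ⟨(v, u), (hmem σ (v, u)).2 hu, rfl⟩
    · -- pairwise distinct coordinates
      intro e he e' he' hne
      rw [hmem] at he he'
      constructor
      · intro h
        apply hne
        have h1 : σ (Sum.inl e.1) = σ (Sum.inl e'.1) := by rw [h]
        rw [he, he'] at h1
        exact Prod.ext h (Sum.inl_injective (ε.injective h1))
      · intro h
        apply hne
        have h1 : σ (Sum.inl e.1) = σ (Sum.inl e'.1) := by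
          rw [he, he', h]
        exact Prod.ext (Sum.inl_injective (σ.injective h1)) h
  -- the distribution
  refine ⟨fun N => ∑ σ : Equiv.Perm I, if matchOf σ = N then w σ else 0, ?_, ?_, ?_, ?_⟩
  · intro N
    exact Finset.sum_nonneg fun σ _ => by split <;> simp [hw0 σ]
  · intro N hN
    have hex : ∃ σ : Equiv.Perm I, (if matchOf σ = N then w σ else 0) ≠ 0 := by
      by_contra h
      push_neg at h
      exact hN (Finset.sum_eq_zero fun σ _ => h σ)
    obtain ⟨σ, hσ⟩ := hex
    by_cases h : matchOf σ = N
    · rw [if_pos h] at hσ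
      rw [← h]
      exact hmatching σ hσ
    · rw [if_neg h] at hσ
      exact absurd rfl hσ
  · rw [Finset.sum_comm]
    rw [← hw1]
    apply Finset.sum_congr rfl
    intro σ _
    exact Finset.sum_ite_eq (Finset.univ) (matchOf σ) (fun _ => w σ) |>.trans
      (if_pos (Finset.mem_univ _))
  · intro e
    have hstep : ∀ N : Finset (A × B), (if e ∈ N then
        ∑ σ : Equiv.Perm I, (if matchOf σ = N then w σ else 0) else 0) =
        ∑ σ : Equiv.Perm I, (if matchOf σ = N then (if e ∈ matchOf σ then w σ else 0) else 0) := by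
      intro N
      split_ifs with h
      · apply Finset.sum_congr rfl
        intro σ _
        by_cases h2 : matchOf σ = N
        · simp [h2, h]
        · simp [h2]
      · symm
        apply Finset.sum_eq_zero
        intro σ _
        by_cases h2 : matchOf σ = N
        · rw [h2]
          simp [h]
        · simp [h2]
    rw [Finset.sum_congr rfl fun N _ => hstep N, Finset.sum_comm]
    have hcollapse : ∀ σ : Equiv.Perm I,
        (∑ N : Finset (A × B), if matchOf σ = N then (if e ∈ matchOf σ then w σ else 0) else 0) =
        (if e ∈ matchOf σ then w σ else 0) :=
      fun σ => (Finset.sum_ite_eq Finset.univ (matchOf σ) _).trans (if_pos (Finset.mem_univ _))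
    rw [Finset.sum_congr rfl fun σ _ => hcollapse σ]
    have : (∑ σ : Equiv.Perm I, if e ∈ matchOf σ then w σ else 0) =
        Mat (Sum.inl e.1) (ε (Sum.inl e.2)) := by
      rw [hentry]
      apply Finset.sum_congr rfl
      intro σ _
      congr 1
      · exact propext (hmem σ e)
    rw [this, hMatAB, Prod.mk.eta]
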